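/- In a normed division algebra, for all A, B, C: conj(A)(BC) + conj(B)(AC) = 2⟨A,B⟩C. -/

import Mathlib

open scoped RealInnerProductSpace

/-- The real part of `A`: the orthogonal projection of `A` onto the span of the unit `e`. -/
noncomputable def ndaRe {n : ℕ} (e A : EuclideanSpace ℝ (Fin n)) : EuclideanSpace ℝ (Fin n) :=
  (⟪e, A⟫ / ⟪e, e⟫) • e

/-- The imaginary part of `A`: the component of `A` orthogonal to the unit `e`. -/
noncomputable def ndaIm {n : ℕ} (e A : EuclideanSpace ℝ (Fin n)) : EuclideanSpace ℝ (Fin n) :=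
  A - ndaRe e A

/-- The conjugation `A ↦ Re(A) - Im(A)` in a normed division algebra with unit `e`. -/
noncomputable def ndaConj {n : ℕ} (e A : EuclideanSpace ℝ (Fin n)) : EuclideanSpace ℝ (Fin n) :=
  ndaRe e A - ndaIm e A

/-- In a normed division algebra, `conj A * (B*C) + conj B * (A*C) = 2⟪A,B⟫ • C`. -/
theorem nda_conj_mul_add {n : ℕ}
    (mul : EuclideanSpace ℝ (Fin n) → EuclideanSpace ℝ (Fin n) → EuclideanSpace ℝ (Fin n))
    (e : EuclideanSpace ℝ (Fin n))
    (h_add_left : ∀ a b c, mul (a + b) c = mul a c + mul b c)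
    (h_add_right : ∀ a b c, mul a (b + c) = mul a b + mul a c)
    (h_smul_left : ∀ (r : ℝ) a b, mul (r • a) b = r • mul a b)
    (h_smul_right : ∀ (r : ℝ) a b, mul a (r • b) = r • mul a b)
    (h_one_left : ∀ a, mul e a = a)
    (h_one_right : ∀ a, mul a e = a)
    (h_norm : ∀ a b, ‖mul a b‖ = ‖a‖ * ‖b‖)
    : ∀ A B C : EuclideanSpace ℝ (Fin n),
      mul (ndaConj e A) (mul B C) + mul (ndaConj e B) (mul A C) = (2 * ⟪A, B⟫) • C := by

  intro A B C
  by_cases he0 : e = 0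
  · have hz : ∀ a : EuclideanSpace ℝ (Fin n), a = 0 := by
      intro a
      have h := h_one_left a
      rw [he0, show (0 : EuclideanSpace ℝ (Fin n)) = (0:ℝ) • (0 : EuclideanSpace ℝ (Fin n)) by simp,
        h_smul_left, zero_smul] at h
      exact h.symm
    rw [hz (mul (ndaConj e A) (mul B C) + mul (ndaConj e B) (mul A C)),
      hz ((2 * ⟪A, B⟫) • C)]
  · -- the unit has norm one
    have hne : ‖e‖ ≠ 0 := fun h => he0 (norm_eq_zero.mp h)
    have he1 : ‖e‖ = 1 := by
      have h := h_norm e e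
      rw [h_one_right] at h
      have := mul_left_cancel₀ hne (by rw [← h, mul_one] : ‖e‖ * 1 = ‖e‖ * ‖e‖)
      exact this.symm
    have hee : ⟪e, e⟫ = 1 := by
      rw [real_inner_self_eq_norm_mul_norm, he1, mul_one]
    have key : ∀ a b, ⟪mul a b, mul a b⟫ = ⟪a, a⟫ * ⟪b, b⟫ := by
      intro a b
      rw [real_inner_self_eq_norm_mul_norm, real_inner_self_eq_norm_mul_norm,
        real_inner_self_eq_norm_mul_norm, h_norm]
      ring
    have L1 : ∀ a b c, ⟪mul a b, mul a c⟫ = ⟪a, a⟫ * ⟪b, c⟫ := by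
      intro a b c
      have h := key a (b + c)
      rw [h_add_right] at h
      simp only [inner_add_left, inner_add_right] at h
      have h1 := key a b
      have h2 := key a c
      have hc1 := real_inner_comm (mul a b) (mul a c)
      have hc2 := real_inner_comm b c
      linear_combination (h - h1 - h2 - hc1 + (inner ℝ a a : ℝ) * hc2) / 2
    have E1 : ∀ a b c d, ⟪mul a c, mul b d⟫ + ⟪mul b c, mul a d⟫ = 2 * ⟪a, b⟫ * ⟪c, d⟫ := by
      intro a b c d
      have h := L1 (a + b) c d
      rw [h_add_left, h_add_left] at h
      simp only [inner_add_left, inner_add_right] at h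
      have h1 := L1 a c d
      have h2 := L1 b c d
      have hc := real_inner_comm a b
      linear_combination h - h1 - h2 + (inner ℝ c d : ℝ) * hc
    have h_sub_left : ∀ a b c, mul (a - b) c = mul a c - mul b c := by
      intro a b c
      have hn : mul (-b) c = -mul b c := by
        have := h_smul_left (-1) b c
        simpa using this
      rw [sub_eq_add_neg, h_add_left, hn, sub_eq_add_neg]
    have hconj : ∀ a, ndaConj e a = (2 * ⟪e, a⟫) • e - a := by
      intro a
      unfold ndaConj ndaIm ndaRe
      rw [hee, div_one]
      module
    rw [hconj A, hconj B, h_sub_left, h_sub_left, h_smul_left, h_smul_left,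
      h_one_left, h_one_left]
    apply ext_inner_right ℝ
    intro X
    simp only [inner_add_left, inner_sub_left, real_inner_smul_left]
    have e1 := E1 A e (mul B C) X
    rw [h_one_left, h_one_left] at e1
    have e2 := E1 B e (mul A C) X
    rw [h_one_left, h_one_left] at e2
    have e3 := E1 B A C X
    have hc1 := real_inner_comm e A
    have hc2 := real_inner_comm e B
    have hc3 := real_inner_comm B A
    linear_combination -e1 - e2 + e3 - (2 * (inner ℝ (mul B C) X : ℝ)) * hc1 -
      (2 * (inner ℝ (mul A C) X : ℝ)) * hc2 - (2 * (inner ℝ C X : ℝ)) * hc3
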